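/- Let (M,g) be a Lorentzian manifold. If there exists a conformal immersion i: M → L^N, then (M,g) is a stably causal spacetime (indeed x⁰∘i is a smooth time function). Moreover, if i is an isometric immersion, then: (a) the function τ = x⁰∘i, where x⁰ is the natural time coordinate of L^N, is a steep temporal function on M, satisfying g(∇τ,∇τ) ≤ −1; and (b) the time-separation d of (M,g) is finite-valued, with d(p,q) ≤ d₀(i(p), i(q)) for all p,q ∈ M, where d₀ is the time-separation of L^N. -/

import Mathlib

open Manifold Set Topology Function
open scoped ENNReal

noncomputable section

/-- The Minkowski scalar product of signature `(-,+,…,+)` on `ℝ^N`. -/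
def mink (N : ℕ) (v w : EuclideanSpace ℝ (Fin N)) : ℝ :=
  ∑ j : Fin N, (if (j : ℕ) = 0 then (-1 : ℝ) else 1) * v j * w j

/-- The canonical future-pointing timelike vector `e₀` of Minkowski spacetime. -/
def minkE0 (N : ℕ) : EuclideanSpace ℝ (Fin N) :=
  (WithLp.equiv 2 (Fin N → ℝ)).symm (fun j => if (j : ℕ) = 0 then 1 else 0)

variable {n : ℕ} {M : Type*} [TopologicalSpace M] [ChartedSpace (EuclideanSpace ℝ (Fin n)) M]

section Defs
variable [IsManifold (𝓡 n) (⊤ : ℕ∞) M]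

/-- A vector field is smooth if it is a smooth section of the tangent bundle. -/
def IsSmoothVF (X : ∀ x : M, TangentSpace (𝓡 n) x) : Prop :=
  ContMDiff (𝓡 n) (𝓡 n).tangent (⊤ : ℕ∞) (fun x => (⟨x, X x⟩ : TangentBundle (𝓡 n) M))

/-- A (smooth) Lorentzian metric: a smooth symmetric bilinear form of index one
(signature `(-,+,…,+)`) on each tangent space. -/
structure IsLorentzMetric
    (g : ∀ x : M, TangentSpace (𝓡 n) x → TangentSpace (𝓡 n) x → ℝ) : Prop where
  symm : ∀ (x : M) (v w : TangentSpace (𝓡 n) x), g x v w = g x w v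
  add_left : ∀ (x : M) (u v w : TangentSpace (𝓡 n) x), g x (u + v) w = g x u w + g x v w
  smul_left : ∀ (x : M) (c : ℝ) (v w : TangentSpace (𝓡 n) x), g x (c • v) w = c * g x v w
  exists_timelike : ∀ x : M, ∃ v : TangentSpace (𝓡 n) x, g x v v < 0
  posdef_orth : ∀ (x : M) (v : TangentSpace (𝓡 n) x), g x v v < 0 →
    ∀ w : TangentSpace (𝓡 n) x, w ≠ 0 → g x v w = 0 → 0 < g x w w
  smooth : ∀ X Y : ∀ x : M, TangentSpace (𝓡 n) x, IsSmoothVF X → IsSmoothVF Y →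
    ContMDiff (𝓡 n) 𝓘(ℝ, ℝ) (⊤ : ℕ∞) fun x => g x (X x) (Y x)

/-- A time orientation: a smooth everywhere-timelike vector field. -/
structure IsTimeOrientation
    (g : ∀ x : M, TangentSpace (𝓡 n) x → TangentSpace (𝓡 n) x → ℝ)
    (T : ∀ x : M, TangentSpace (𝓡 n) x) : Prop where
  smoothVF : IsSmoothVF T
  timelike : ∀ x : M, g x (T x) (T x) < 0

end Defs

variable (g : ∀ x : M, TangentSpace (𝓡 n) x → TangentSpace (𝓡 n) x → ℝ)
  (T : ∀ x : M, TangentSpace (𝓡 n) x)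

/-- `v` is a timelike tangent vector at `x`. -/
def TimelikeVec (x : M) (v : TangentSpace (𝓡 n) x) : Prop := g x v v < 0

/-- `v` is a causal tangent vector at `x`. -/
def CausalVec (x : M) (v : TangentSpace (𝓡 n) x) : Prop := v ≠ 0 ∧ g x v v ≤ 0

/-- `v` is future-directed with respect to the time orientation `T`. -/
def FutureDir (x : M) (v : TangentSpace (𝓡 n) x) : Prop := g x v (T x) < 0

/-- `v` is past-directed with respect to the time orientation `T`. -/
def PastDir (x : M) (v : TangentSpace (𝓡 n) x) : Prop := 0 < g x v (T x)

/-- The velocity vector of a curve. -/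
def curveDeriv (γ : ℝ → M) (t : ℝ) : TangentSpace (𝓡 n) (γ t) :=
  mfderiv 𝓘(ℝ, ℝ) (𝓡 n) γ t ((1 : ℝ) : TangentSpace 𝓘(ℝ, ℝ) t)

/-- `γ` is a (`C¹`) future-directed causal curve on the parameter interval `[a,b]`. -/
structure IsCausalSeg (γ : ℝ → M) (a b : ℝ) : Prop where
  contMDiff : ContMDiff 𝓘(ℝ, ℝ) (𝓡 n) 1 γ
  causal : ∀ t ∈ Icc a b, CausalVec g (γ t) (curveDeriv γ t)
  future : ∀ t ∈ Icc a b, FutureDir g T (γ t) (curveDeriv γ t)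

/-- `γ` is a (`C¹`) future-directed timelike curve on the parameter interval `[a,b]`. -/
structure IsTimelikeSeg (γ : ℝ → M) (a b : ℝ) : Prop where
  contMDiff : ContMDiff 𝓘(ℝ, ℝ) (𝓡 n) 1 γ
  timelike : ∀ t ∈ Icc a b, TimelikeVec g (γ t) (curveDeriv γ t)
  future : ∀ t ∈ Icc a b, FutureDir g T (γ t) (curveDeriv γ t)

/-- Chronological relation `p ≪ q`. -/
def ChronRel (p q : M) : Prop :=
  ∃ γ : ℝ → M, IsTimelikeSeg g T γ 0 1 ∧ γ 0 = p ∧ γ 1 = q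

/-- Causal relation `p ≤ q` (`q ∈ J⁺(p)`). -/
def CausalRel (p q : M) : Prop :=
  p = q ∨ ∃ γ : ℝ → M, IsCausalSeg g T γ 0 1 ∧ γ 0 = p ∧ γ 1 = q

/-- Chronological future `I⁺(p)`. -/
def IPlus (p : M) : Set M := {q | ChronRel g T p q}

/-- Causal future `J⁺(p)`. -/
def JPlus (p : M) : Set M := {q | CausalRel g T p q}

/-- Causal past `J⁻(q)`. -/
def JMinus (q : M) : Set M := {p | CausalRel g T p q}

/-- Causal future of a set. -/
def JPlusSet (A : Set M) : Set M := {q | ∃ p ∈ A, CausalRel g T p q}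

/-- Causal past of a set. -/
def JMinusSet (B : Set M) : Set M := {p | ∃ q ∈ B, CausalRel g T p q}

/-- `J(A,B) := J⁺(A) ∩ J⁻(B)`. -/
def JSets (A B : Set M) : Set M := JPlusSet g T A ∩ JMinusSet g T B

/-- A time function: continuous and strictly increasing on every
future-directed causal curve. -/
def IsTimeFunction (f : M → ℝ) : Prop :=
  Continuous f ∧ ∀ (γ : ℝ → M) (a b : ℝ), a < b → IsCausalSeg g T γ a b → f (γ a) < f (γ b)

/-- A spacetime is stably causal iff it admits a time function. -/
def StablyCausal : Prop := ∃ f : M → ℝ, IsTimeFunction g T f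

/-- The spacetime is causal: no closed causal curves. -/
def IsCausalST : Prop := ∀ p q : M, CausalRel g T p q → CausalRel g T q p → p = q

/-- Globally hyperbolic: causal with compact causal diamonds. -/
def GloballyHyperbolic : Prop :=
  IsCausalST g T ∧ ∀ p q : M, IsCompact (JPlus g T p ∩ JMinus g T q)

/-- Causally simple: causal with closed `J⁺(p)` and `J⁻(p)`. -/
def CausallySimple : Prop :=
  IsCausalST g T ∧ ∀ p : M, IsClosed (JPlus g T p) ∧ IsClosed (JMinus g T p)

/-- `X` is the gradient of `f` with respect to `g`: `g(∇f, ·) = df`. -/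
def IsGradient (f : M → ℝ) (X : ∀ x : M, TangentSpace (𝓡 n) x) : Prop :=
  ∀ (x : M) (v : TangentSpace (𝓡 n) x), g x (X x) v = mfderiv (𝓡 n) 𝓘(ℝ, ℝ) f x v

/-- `f` is a temporal function with (past-directed timelike) gradient `X`. -/
structure IsTemporalWithGrad (f : M → ℝ) (X : ∀ x : M, TangentSpace (𝓡 n) x) : Prop where
  contMDiff : ContMDiff (𝓡 n) 𝓘(ℝ, ℝ) (⊤ : ℕ∞) f
  grad : IsGradient g f X
  timelike : ∀ x : M, TimelikeVec g x (X x)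
  past : ∀ x : M, PastDir g T x (X x)

/-- An inextendible future-directed timelike curve (parametrized on all of `ℝ`,
converging at neither end). -/
structure IsInextTimelike (γ : ℝ → M) : Prop where
  contMDiff : ContMDiff 𝓘(ℝ, ℝ) (𝓡 n) 1 γ
  timelike : ∀ t : ℝ, TimelikeVec g (γ t) (curveDeriv γ t)
  future : ∀ t : ℝ, FutureDir g T (γ t) (curveDeriv γ t)
  noFutureEndpoint : ¬∃ p : M, Filter.Tendsto γ Filter.atTop (nhds p)
  noPastEndpoint : ¬∃ p : M, Filter.Tendsto γ Filter.atBot (nhds p)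

/-- A Cauchy hypersurface: a set met exactly once by every inextendible timelike curve. -/
def IsCauchyHypersurface (S : Set M) : Prop :=
  ∀ γ : ℝ → M, IsInextTimelike g T γ → ∃! t : ℝ, γ t ∈ S

/-- The Lorentzian length of a curve segment (on `[0,1]`). -/
def curveLength (γ : ℝ → M) : ℝ :=
  ∫ t in (0:ℝ)..1, Real.sqrt |g (γ t) (curveDeriv γ t) (curveDeriv γ t)|

/-- The time-separation (Lorentzian distance) function. -/
def timeSep (p q : M) : ℝ≥0∞ :=
  ⨆ γ : {γ : ℝ → M // IsCausalSeg g T γ 0 1 ∧ γ 0 = p ∧ γ 1 = q},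
    ENNReal.ofReal (curveLength g γ.1)

/-- An isometric immersion into Minkowski spacetime `𝕃^N`, compatible with the
time orientations. -/
structure IsIsometricImmersionMink (N : ℕ) (i : M → EuclideanSpace ℝ (Fin N)) : Prop where
  contMDiff : ContMDiff (𝓡 n) (𝓡 N) (⊤ : ℕ∞) i
  immersion : ∀ x : M, Injective (mfderiv (𝓡 n) (𝓡 N) i x)
  isometric : ∀ (x : M) (v w : TangentSpace (𝓡 n) x),
    mink N (mfderiv (𝓡 n) (𝓡 N) i x v) (mfderiv (𝓡 n) (𝓡 N) i x w) = g x v w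
  timeOriented : ∀ (x : M) (v : TangentSpace (𝓡 n) x),
    TimelikeVec g x v → FutureDir g T x v →
      mink N (mfderiv (𝓡 n) (𝓡 N) i x v) (minkE0 N) < 0

/-- An isometric embedding into Minkowski spacetime `𝕃^N`. -/
structure IsIsometricEmbeddingMink (N : ℕ) (i : M → EuclideanSpace ℝ (Fin N))
    extends IsIsometricImmersionMink g T N i : Prop where
  embedding : IsEmbedding i

/-- A conformal immersion into Minkowski spacetime `𝕃^N`. -/
structure IsConformalImmersionMink (N : ℕ) (i : M → EuclideanSpace ℝ (Fin N)) : Prop where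
  contMDiff : ContMDiff (𝓡 n) (𝓡 N) (⊤ : ℕ∞) i
  immersion : ∀ x : M, Injective (mfderiv (𝓡 n) (𝓡 N) i x)
  conformal : ∃ Ω : M → ℝ, (∀ x, 0 < Ω x) ∧ ContMDiff (𝓡 n) 𝓘(ℝ, ℝ) (⊤ : ℕ∞) Ω ∧
    ∀ (x : M) (v w : TangentSpace (𝓡 n) x),
      mink N (mfderiv (𝓡 n) (𝓡 N) i x v) (mfderiv (𝓡 n) (𝓡 N) i x w) = Ω x * g x v w
  timeOriented : ∀ (x : M) (v : TangentSpace (𝓡 n) x),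
    TimelikeVec g x v → FutureDir g T x v →
      mink N (mfderiv (𝓡 n) (𝓡 N) i x v) (minkE0 N) < 0

/-- A conformal embedding into Minkowski spacetime `𝕃^N`. -/
structure IsConformalEmbeddingMink (N : ℕ) (i : M → EuclideanSpace ℝ (Fin N))
    extends IsConformalImmersionMink g T N i : Prop where
  embedding : IsEmbedding i


section MinkHelpers
variable {N : ℕ} (hN : 0 < N)

lemma mink_split (v w : EuclideanSpace ℝ (Fin N)) :
    mink N v w = -(v ⟨0, hN⟩ * w ⟨0, hN⟩) +
      ∑ j ∈ Finset.univ.erase ⟨0, hN⟩, v j * w j := by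
  unfold mink
  rw [← Finset.add_sum_erase _ _ (Finset.mem_univ (⟨0, hN⟩ : Fin N))]
  simp only [Fin.val_mk, if_true]
  congr 1
  · ring
  · refine Finset.sum_congr rfl fun j hj => ?_
    have : (j : ℕ) ≠ 0 := by
      intro h
      exact (Finset.mem_erase.mp hj).1 (Fin.ext h)
    simp [this]

lemma mink_e0 (v : EuclideanSpace ℝ (Fin N)) :
    mink N v (minkE0 N) = -(v ⟨0, hN⟩) := by
  rw [mink_split hN]
  have h0 : minkE0 N ⟨0, hN⟩ = 1 := by simp [minkE0, WithLp.equiv_symm_apply]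
  have h1 : ∀ j ∈ Finset.univ.erase (⟨0, hN⟩ : Fin N), v j * minkE0 N j = 0 := by
    intro j hj
    have : (j : ℕ) ≠ 0 := fun h => (Finset.mem_erase.mp hj).1 (Fin.ext h)
    simp [minkE0, WithLp.equiv_symm_apply, this]
  rw [Finset.sum_congr rfl h1, h0]
  simp

lemma mink_comm (v w : EuclideanSpace ℝ (Fin N)) : mink N v w = mink N w v := by
  unfold mink; exact Finset.sum_congr rfl fun j _ => by ring

lemma mink_add_left (u v w : EuclideanSpace ℝ (Fin N)) :
    mink N (u + v) w = mink N u w + mink N v w := by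
  unfold mink
  rw [← Finset.sum_add_distrib]
  refine Finset.sum_congr rfl fun j _ => ?_
  by_cases h : (j : ℕ) = 0 <;> simp [PiLp.add_apply, h] <;> ring

lemma mink_smul_left (c : ℝ) (v w : EuclideanSpace ℝ (Fin N)) :
    mink N (c • v) w = c * mink N v w := by
  unfold mink
  rw [Finset.mul_sum]
  refine Finset.sum_congr rfl fun j _ => ?_
  by_cases h : (j : ℕ) = 0 <;> simp [PiLp.smul_apply, h] <;> ring

/-- causal vector: time component dominates spatial norm -/
lemma spatial_le (v : EuclideanSpace ℝ (Fin N)) (h : mink N v v ≤ 0) :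
    ∑ j ∈ Finset.univ.erase (⟨0, hN⟩ : Fin N), v j ^ 2 ≤ v ⟨0, hN⟩ ^ 2 := by
  rw [mink_split hN] at h
  have : ∑ j ∈ Finset.univ.erase (⟨0, hN⟩ : Fin N), v j * v j ≤ v ⟨0, hN⟩ * v ⟨0, hN⟩ := by
    linarith
  simpa [sq] using this

/-- nonzero causal vector has nonzero time component -/
lemma time_ne_zero (v : EuclideanSpace ℝ (Fin N)) (hv : v ≠ 0) (h : mink N v v ≤ 0) :
    v ⟨0, hN⟩ ≠ 0 := by
  intro h0
  apply hv
  have hs := spatial_le hN v h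
  have hs' : ∑ j ∈ Finset.univ.erase (⟨0, hN⟩ : Fin N), v j ^ 2 ≤ 0 := by
    calc ∑ j ∈ Finset.univ.erase (⟨0, hN⟩ : Fin N), v j ^ 2 ≤ v ⟨0, hN⟩ ^ 2 := hs
      _ = 0 := by rw [h0]; ring
  have hz := (Finset.sum_eq_zero_iff_of_nonneg
    (fun j (_ : j ∈ Finset.univ.erase (⟨0, hN⟩ : Fin N)) => sq_nonneg (v j))).mp
    (le_antisymm hs' (Finset.sum_nonneg fun j _ => sq_nonneg (v j)))
  ext j
  show v j = 0
  by_cases hj : j = (⟨0, hN⟩ : Fin N)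
  · rw [hj]; exact h0
  · have := hz j (Finset.mem_erase.mpr ⟨hj, Finset.mem_univ j⟩)
    exact pow_eq_zero_iff (two_ne_zero) |>.mp this

/-- sign lemma: causal w, timelike u with positive time comp, mink w u < 0 ⇒ w time comp > 0. -/
lemma causal_sign (w u : EuclideanSpace ℝ (Fin N)) (hw0 : w ≠ 0) (hw : mink N w w ≤ 0)
    (hu : mink N u u < 0) (huz : 0 < u ⟨0, hN⟩) (hwu : mink N w u < 0) :
    0 < w ⟨0, hN⟩ := by
  set z : Fin N := ⟨0, hN⟩
  set s := Finset.univ.erase z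
  have hSw : ∑ j ∈ s, w j ^ 2 ≤ w z ^ 2 := spatial_le hN w hw
  have hSu : ∑ j ∈ s, u j ^ 2 < u z ^ 2 := by
    have := mink_split hN u u
    rw [this] at hu
    have h2 : ∑ j ∈ s, u j * u j < u z * u z := by linarith
    simpa [sq] using h2
  have hCS := Finset.sum_mul_sq_le_sq_mul_sq s (fun j => w j) (fun j => u j)
  have hP : ∑ j ∈ s, w j * u j < w z * u z := by
    rw [mink_split hN] at hwu; linarith
  have hwz : w z ≠ 0 := time_ne_zero hN w hw0 hw
  have hSw0 : (0:ℝ) ≤ ∑ j ∈ s, w j ^ 2 := Finset.sum_nonneg fun j _ => sq_nonneg _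
  have hSu0 : (0:ℝ) ≤ ∑ j ∈ s, u j ^ 2 := Finset.sum_nonneg fun j _ => sq_nonneg _
  have hwz2 : 0 < w z ^ 2 := by positivity
  by_contra hle
  push_neg at hle
  have hwzneg : w z < 0 := lt_of_le_of_ne hle hwz
  have h1 : w z * u z < 0 := mul_neg_of_neg_of_pos hwzneg huz
  have h2 : (w z * u z) ^ 2 < (∑ j ∈ s, w j * u j) ^ 2 := by nlinarith
  have h3 : (∑ j ∈ s, w j ^ 2) * ∑ j ∈ s, u j ^ 2 < w z ^ 2 * u z ^ 2 := by nlinarith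
  nlinarith

/-- orthogonal to timelike ⇒ nonneg norm -/
lemma orth_timelike_nonneg (hN : 0 < N) (a u : EuclideanSpace ℝ (Fin N)) (ha : mink N a a < 0)
    (hau : mink N a u = 0) : 0 ≤ mink N u u := by
  set z : Fin N := ⟨0, hN⟩ with hzdef
  set s := Finset.univ.erase z with hsdef
  have hSa : ∑ j ∈ s, a j ^ 2 < a z ^ 2 := by
    rw [mink_split hN] at ha
    have h2 : ∑ j ∈ s, a j * a j < a z * a z := by rw [hzdef, hsdef]; linarith
    calc ∑ j ∈ s, a j ^ 2 = ∑ j ∈ s, a j * a j := by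
          exact Finset.sum_congr rfl fun j _ => sq (a j)
      _ < a z * a z := h2
      _ = a z ^ 2 := (sq (a z)).symm
  have hQ : a z * u z = ∑ j ∈ s, a j * u j := by
    rw [mink_split hN] at hau
    rw [hzdef, hsdef]; linarith
  have hCS := Finset.sum_mul_sq_le_sq_mul_sq s (fun j => a j) (fun j => u j)
  have hSa0 : (0:ℝ) ≤ ∑ j ∈ s, a j ^ 2 := Finset.sum_nonneg fun j _ => sq_nonneg _
  have hSu0 : (0:ℝ) ≤ ∑ j ∈ s, u j ^ 2 := Finset.sum_nonneg fun j _ => sq_nonneg _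
  have haz2 : 0 < a z ^ 2 := lt_of_le_of_lt hSa0 hSa
  have h1 : a z ^ 2 * u z ^ 2 ≤ (∑ j ∈ s, a j ^ 2) * ∑ j ∈ s, u j ^ 2 := by
    have : (a z * u z) ^ 2 = (∑ j ∈ s, a j * u j) ^ 2 := by rw [hQ]
    nlinarith [this, hCS]
  have h2 : (∑ j ∈ s, a j ^ 2) * ∑ j ∈ s, u j ^ 2 ≤ a z ^ 2 * ∑ j ∈ s, u j ^ 2 :=
    mul_le_mul_of_nonneg_right hSa.le hSu0
  have key : u z ^ 2 ≤ ∑ j ∈ s, u j ^ 2 := by nlinarith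
  rw [mink_split hN]
  have heq : ∑ j ∈ s, u j * u j = ∑ j ∈ s, u j ^ 2 :=
    Finset.sum_congr rfl fun j _ => (sq (u j)).symm
  show 0 ≤ -(u z * u z) + ∑ j ∈ s, u j * u j
  nlinarith [key, heq]

lemma mink_add_right {N : ℕ} (u v w : EuclideanSpace ℝ (Fin N)) :
    mink N u (v + w) = mink N u v + mink N u w := by
  rw [mink_comm u (v + w), mink_add_left, mink_comm v u, mink_comm w u]

end MinkHelpers

section ManifoldHelpers

variable {n : ℕ} {M : Type*} [TopologicalSpace M] [ChartedSpace (EuclideanSpace ℝ (Fin n)) M]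
  [IsManifold (𝓡 n) (⊤ : ℕ∞) M]

instance {N : ℕ} (y : EuclideanSpace ℝ (Fin N)) :
    CoeFun (TangentSpace (𝓡 N) y) (fun _ => Fin N → ℝ) :=
  ⟨fun v => WithLp.ofLp (p := 2) v⟩

lemma tau_contMDiff {N : ℕ} (hN : 0 < N) {i : M → EuclideanSpace ℝ (Fin N)}
    (hi : ContMDiff (𝓡 n) (𝓡 N) (⊤ : ℕ∞) i) :
    ContMDiff (𝓡 n) 𝓘(ℝ, ℝ) (⊤ : ℕ∞) (fun x => i x ⟨0, hN⟩) := by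
  have h2 : (fun x => i x (⟨0, hN⟩ : Fin N))
      = (⇑(EuclideanSpace.proj (⟨0, hN⟩ : Fin N)) ∘ i) := by
    funext x; simp
  rw [h2]
  exact (EuclideanSpace.proj (⟨0, hN⟩ : Fin N)).contMDiff.comp hi

lemma mfderiv_time_coord {N : ℕ} (hN : 0 < N) {i : M → EuclideanSpace ℝ (Fin N)}
    (hi : ContMDiff (𝓡 n) (𝓡 N) (⊤ : ℕ∞) i) (x : M) (v : TangentSpace (𝓡 n) x) :
    mfderiv (𝓡 n) 𝓘(ℝ, ℝ) (fun y => i y ⟨0, hN⟩) x v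
      = mfderiv (𝓡 n) (𝓡 N) i x v ⟨0, hN⟩ := by
  have hfun : (fun y => i y (⟨0, hN⟩ : Fin N))
      = (⇑(EuclideanSpace.proj (⟨0, hN⟩ : Fin N)) ∘ i) := by
    funext y; simp
  have hπ : MDifferentiableAt (𝓡 N) 𝓘(ℝ, ℝ)
      (EuclideanSpace.proj (⟨0, hN⟩ : Fin N)) (i x) :=
    ((EuclideanSpace.proj (⟨0, hN⟩ : Fin N) :
      EuclideanSpace ℝ (Fin N) →L[ℝ] ℝ).contMDiff (n := ⊤)).mdifferentiableAt (by simp)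
  rw [hfun, mfderiv_comp x hπ (hi.mdifferentiableAt (by simp))]
  have hπd : mfderiv (𝓡 N) 𝓘(ℝ, ℝ) (EuclideanSpace.proj (⟨0, hN⟩ : Fin N)) (i x)
      = EuclideanSpace.proj (⟨0, hN⟩ : Fin N) := by
    rw [mfderiv_eq_fderiv]; exact ContinuousLinearMap.fderiv _
  simp only [ContinuousLinearMap.coe_comp', Function.comp_apply, hπd]
  rfl

lemma curveDeriv_comp {N : ℕ} {i : M → EuclideanSpace ℝ (Fin N)}
    (hi : ContMDiff (𝓡 n) (𝓡 N) (⊤ : ℕ∞) i) {γ : ℝ → M}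
    (hγ : ContMDiff 𝓘(ℝ, ℝ) (𝓡 n) 1 γ) (t : ℝ) :
    curveDeriv (fun s => i (γ s)) t = mfderiv (𝓡 n) (𝓡 N) i (γ t) (curveDeriv γ t) := by
  have h : mfderiv 𝓘(ℝ, ℝ) (𝓡 N) (i ∘ γ) t
      = (mfderiv (𝓡 n) (𝓡 N) i (γ t)).comp (mfderiv 𝓘(ℝ, ℝ) (𝓡 n) γ t) :=
    mfderiv_comp t (hi.mdifferentiableAt (by simp)) (hγ.mdifferentiableAt one_ne_zero)
  show mfderiv 𝓘(ℝ, ℝ) (𝓡 N) (fun s => i (γ s)) t ((1:ℝ) : TangentSpace 𝓘(ℝ, ℝ) t) = _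
  rw [show (fun s => i (γ s)) = i ∘ γ from rfl, h]
  rfl

lemma curveDeriv_eq_deriv {N : ℕ} (σ : ℝ → EuclideanSpace ℝ (Fin N)) (t : ℝ) :
    curveDeriv σ t = deriv σ t := by
  have h : mfderiv 𝓘(ℝ, ℝ) (𝓡 N) σ t = fderiv ℝ σ t := mfderiv_eq_fderiv
  unfold curveDeriv
  rw [h]
  exact fderiv_apply_one_eq_deriv (f := σ) (x := t)


lemma exists_grad_vec {g : ∀ x : M, TangentSpace (𝓡 n) x → TangentSpace (𝓡 n) x → ℝ}
    (hg : IsLorentzMetric g) (x : M) (φ : TangentSpace (𝓡 n) x →L[ℝ] ℝ) :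
    ∃ X : TangentSpace (𝓡 n) x, ∀ v, g x X v = φ v := by
  classical
  haveI : FiniteDimensional ℝ (TangentSpace (𝓡 n) x) :=
    inferInstanceAs (FiniteDimensional ℝ (EuclideanSpace ℝ (Fin n)))
  let B : TangentSpace (𝓡 n) x →ₗ[ℝ] (TangentSpace (𝓡 n) x →ₗ[ℝ] ℝ) :=
    LinearMap.mk₂ ℝ (g x) (hg.add_left x) (fun c v w => hg.smul_left x c v w)
      (fun u v w => by
        rw [hg.symm x u (v + w), hg.add_left x, hg.symm x v u, hg.symm x w u])
      (fun c u v => by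
        rw [hg.symm x u (c • v), hg.smul_left x, hg.symm x v u]; rfl)
  have hinj : Function.Injective B := by
    rw [injective_iff_map_eq_zero]
    intro w hw
    by_contra hw0
    obtain ⟨v0, hv0⟩ := hg.exists_timelike x
    have h1 : g x v0 w = 0 := by
      rw [hg.symm x v0 w]
      have := LinearMap.congr_fun hw v0
      simpa [B] using this
    have h3 := hg.posdef_orth x v0 hv0 w hw0 h1
    have h2 : g x w w = 0 := by
      have := LinearMap.congr_fun hw w
      simpa [B] using this
    linarith
  have hsurj : Function.Surjective B :=
    (LinearMap.injective_iff_surjective_of_finrank_eq_finrank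
      (Subspace.dual_finrank_eq (V := TangentSpace (𝓡 n) x)).symm).mp hinj
  obtain ⟨X, hX⟩ := hsurj (φ : TangentSpace (𝓡 n) x →ₗ[ℝ] ℝ)
  refine ⟨X, fun v => ?_⟩
  have := LinearMap.congr_fun hX v
  simpa [B] using this

end ManifoldHelpers

/-- The differential of a real-valued function applied to a tangent vector, as a real
number. -/
def mdiffR {n : ℕ} {M : Type*} [TopologicalSpace M]
    [ChartedSpace (EuclideanSpace ℝ (Fin n)) M]
    (f : M → ℝ) (x : M) (v : TangentSpace (𝓡 n) x) : ℝ :=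
  mfderiv (𝓡 n) 𝓘(ℝ, ℝ) f x v

/-- If a Lorentzian manifold admits a conformal immersion `i` into `𝕃^N`,
then it is stably causal (indeed `x⁰ ∘ i` is a smooth time function); if `i` is moreover an
isometric immersion then (a) `τ = x⁰ ∘ i` is a steep temporal function, and (b) the
time-separation `d` of `(M,g)` is finite-valued, with `d(p,q) ≤ d₀(i p, i q)`. -/
theorem conformal_immersion_mink_implies_stably_causal
    {n : ℕ} {M : Type*} [TopologicalSpace M] [ChartedSpace (EuclideanSpace ℝ (Fin n)) M]
    [IsManifold (𝓡 n) (⊤ : ℕ∞) M] [ConnectedSpace M]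
    (g : ∀ x : M, TangentSpace (𝓡 n) x → TangentSpace (𝓡 n) x → ℝ)
    (T : ∀ x : M, TangentSpace (𝓡 n) x)
    (hg : IsLorentzMetric g) (hT : IsTimeOrientation g T)
    (N : ℕ) (hN : 0 < N) (i : M → EuclideanSpace ℝ (Fin N)) :
    (IsConformalImmersionMink g T N i →
      (IsTimeFunction g T (fun x => i x ⟨0, hN⟩) ∧
        ContMDiff (𝓡 n) 𝓘(ℝ, ℝ) (⊤ : ℕ∞) (fun x => i x ⟨0, hN⟩) ∧
        StablyCausal g T)) ∧
    (IsIsometricImmersionMink g T N i →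
      ((∃ X : ∀ x : M, TangentSpace (𝓡 n) x,
          IsTemporalWithGrad g T (fun x => i x ⟨0, hN⟩) X ∧
          ∀ x : M, g x (X x) (X x) ≤ -1) ∧
        (∀ p q : M,
          timeSep g T p q ≤
            timeSep (fun (_ : EuclideanSpace ℝ (Fin N)) v w => mink N v w)
              (fun _ => minkE0 N) (i p) (i q)) ∧
        (∀ p q : M, timeSep g T p q ≠ ⊤))) := by
  have hτsm' : ∀ (i' : M → EuclideanSpace ℝ (Fin N)), ContMDiff (𝓡 n) (𝓡 N) (⊤ : ℕ∞) i' →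
      ContMDiff (𝓡 n) 𝓘(ℝ, ℝ) (⊤ : ℕ∞) (fun x => i' x ⟨0, hN⟩) := fun i' hi' => tau_contMDiff hN hi'
  -- key sign fact
  have key : IsConformalImmersionMink g T N i → ∀ (x : M) (v : TangentSpace (𝓡 n) x),
      CausalVec g x v → FutureDir g T x v →
      0 < mfderiv (𝓡 n) (𝓡 N) i x v ⟨0, hN⟩ := by
    intro hc x v hcv hfv
    obtain ⟨Ω, hΩpos, -, hΩ⟩ := hc.conformal
    set w := mfderiv (𝓡 n) (𝓡 N) i x v with hw
    set u := mfderiv (𝓡 n) (𝓡 N) i x (T x) with hu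
    have hww : mink N w w ≤ 0 := by
      rw [hw, hΩ]; exact mul_nonpos_of_nonneg_of_nonpos (hΩpos x).le hcv.2
    have hw0 : w ≠ 0 := by
      intro h
      refine hcv.1 (hc.immersion x ?_)
      rw [(mfderiv (𝓡 n) (𝓡 N) i x).map_zero, ← hw]
      exact h
    have huu : mink N u u < 0 := by
      rw [hu, hΩ]; exact mul_neg_of_pos_of_neg (hΩpos x) (hT.timelike x)
    have huz : 0 < u ⟨0, hN⟩ := by
      have h := hc.timeOriented x (T x) (hT.timelike x) (hT.timelike x)
      rw [← hu, mink_e0 hN u] at h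
      linarith
    have hwu : mink N w u < 0 := by
      rw [hw, hu, hΩ]
      exact mul_neg_of_pos_of_neg (hΩpos x) hfv
    exact causal_sign hN w u hw0 hww huu huz hwu
  -- derivative of the time coordinate along curves
  have hderivh : ContMDiff (𝓡 n) (𝓡 N) (⊤ : ℕ∞) i → ∀ (γ : ℝ → M),
      ContMDiff 𝓘(ℝ, ℝ) (𝓡 n) 1 γ → ∀ t : ℝ,
      deriv (fun s => i (γ s) ⟨0, hN⟩) t
        = mfderiv (𝓡 n) (𝓡 N) i (γ t) (curveDeriv γ t) ⟨0, hN⟩ := by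
    intro hi γ hγ t
    have h1 : (fun s => i (γ s) (⟨0, hN⟩ : Fin N)) = (fun x => i x ⟨0, hN⟩) ∘ γ := rfl
    have h2 : mfderiv 𝓘(ℝ, ℝ) 𝓘(ℝ, ℝ) (fun s => i (γ s) (⟨0, hN⟩ : Fin N)) t
        = (mfderiv (𝓡 n) 𝓘(ℝ, ℝ) (fun x => i x ⟨0, hN⟩) (γ t)).comp
          (mfderiv 𝓘(ℝ, ℝ) (𝓡 n) γ t) := by
      rw [h1]
      exact mfderiv_comp t ((hτsm' i hi).mdifferentiableAt (by simp))
        (hγ.mdifferentiableAt one_ne_zero)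
    have hfd : mfderiv 𝓘(ℝ, ℝ) 𝓘(ℝ, ℝ) (fun s => i (γ s) (⟨0, hN⟩ : Fin N)) t
        = fderiv ℝ (fun s => i (γ s) (⟨0, hN⟩ : Fin N)) t := mfderiv_eq_fderiv
    have h3 : deriv (fun s => i (γ s) (⟨0, hN⟩ : Fin N)) t
        = mfderiv 𝓘(ℝ, ℝ) 𝓘(ℝ, ℝ) (fun s => i (γ s) (⟨0, hN⟩ : Fin N)) t
          ((1 : ℝ) : TangentSpace 𝓘(ℝ, ℝ) t) := by
      rw [hfd]; exact fderiv_apply_one_eq_deriv.symm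
    rw [h3, h2]
    exact mfderiv_time_coord hN hi (γ t) (curveDeriv γ t)
  -- time function from a conformal immersion
  have htime : IsConformalImmersionMink g T N i →
      IsTimeFunction g T (fun x => i x ⟨0, hN⟩) := by
    intro hc
    refine ⟨(hτsm' i hc.contMDiff).continuous, ?_⟩
    intro γ a b hab hseg
    have hhsm := (((hτsm' i hc.contMDiff).of_le (by exact_mod_cast le_top)).comp hseg.contMDiff).contDiff
    have hmono : StrictMonoOn (fun s => i (γ s) (⟨0, hN⟩ : Fin N)) (Icc a b) := by
      refine strictMonoOn_of_deriv_pos (convex_Icc a b)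
        hhsm.continuous.continuousOn ?_
      intro t ht
      rw [hderivh hc.contMDiff γ hseg.contMDiff t]
      have ht' : t ∈ Icc a b := interior_subset ht
      exact key hc (γ t) _ (hseg.causal t ht') (hseg.future t ht')
    exact hmono (left_mem_Icc.mpr hab.le) (right_mem_Icc.mpr hab.le) hab
  constructor
  · intro hc
    exact ⟨htime hc, hτsm' i hc.contMDiff, ⟨fun x => i x ⟨0, hN⟩, htime hc⟩⟩
  · intro hiso
    have hc : IsConformalImmersionMink g T N i :=
      { contMDiff := hiso.contMDiff
        immersion := hiso.immersion
        conformal := ⟨fun _ => 1, fun _ => one_pos, contMDiff_const,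
          fun x v w => by rw [one_mul]; exact hiso.isometric x v w⟩
        timeOriented := hiso.timeOriented }
    have hkey := key hc
    have hτsm := hτsm' i hiso.contMDiff
    -- gradient vector field
    have hgradX : ∀ x : M, ∃ X : TangentSpace (𝓡 n) x,
        ∀ v, g x X v = mfderiv (𝓡 n) 𝓘(ℝ, ℝ) (fun y => i y ⟨0, hN⟩) x v :=
      fun x => exists_grad_vec hg x (mfderiv (𝓡 n) 𝓘(ℝ, ℝ) (fun y => i y ⟨0, hN⟩) x)
    choose X hX using hgradX
    have hTne : ∀ x : M, T x ≠ 0 := by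
      intro x h
      have h0 : g x (T x) (T x) < 0 := hT.timelike x
      rw [h] at h0
      have hz : g x (0 : TangentSpace (𝓡 n) x) 0 = 0 := by
        have := hg.smul_left x 0 0 0
        simpa using this
      linarith
    have haz : ∀ x : M, 0 < mfderiv (𝓡 n) (𝓡 N) i x (T x) ⟨0, hN⟩ :=
      fun x => hkey x (T x) ⟨hTne x, (hT.timelike x).le⟩ (hT.timelike x)
    have hXval : ∀ (x : M) (v : TangentSpace (𝓡 n) x),
        g x (X x) v = mfderiv (𝓡 n) (𝓡 N) i x v ⟨0, hN⟩ := by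
      intro x v
      rw [hX x v, mfderiv_time_coord hN hiso.contMDiff]
    have he0e0 : mink N (minkE0 N) (minkE0 N) = -1 := by
      rw [mink_e0 hN]
      simp [minkE0, WithLp.equiv_symm_apply]
    have hsteep : ∀ x : M, g x (X x) (X x) ≤ -1 := by
      intro x
      set w : EuclideanSpace ℝ (Fin N) := mfderiv (𝓡 n) (𝓡 N) i x (X x) with hwdef
      set a : EuclideanSpace ℝ (Fin N) := mfderiv (𝓡 n) (𝓡 N) i x (T x) with hadef
      have hgXX : g x (X x) (X x) = w ⟨0, hN⟩ := hXval x (X x)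
      have hmaw : mink N a w = a ⟨0, hN⟩ := by
        calc mink N a w = g x (T x) (X x) := hiso.isometric x (T x) (X x)
          _ = g x (X x) (T x) := hg.symm x (T x) (X x)
          _ = a ⟨0, hN⟩ := hXval x (T x)
      have horth : mink N a (w + minkE0 N) = 0 := by
        rw [mink_add_right, hmaw, mink_e0 hN a]
        ring
      have haa : mink N a a < 0 := by
        rw [hadef, hiso.isometric]; exact hT.timelike x
      have hpos := orth_timelike_nonneg hN a (w + minkE0 N) haa horth
      have hww : mink N w w = w ⟨0, hN⟩ := by
        calc mink N w w = g x (X x) (X x) := hiso.isometric x (X x) (X x)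
          _ = w ⟨0, hN⟩ := hgXX
      have hwe0 : mink N w (minkE0 N) = -(w ⟨0, hN⟩) := mink_e0 hN w
      have hexp : mink N (w + minkE0 N) (w + minkE0 N) = -(w ⟨0, hN⟩) - 1 := by
        rw [mink_add_right, mink_add_left, mink_add_left, hww, hwe0,
          mink_comm (minkE0 N) w, hwe0, he0e0]
        ring
      rw [hexp] at hpos
      linarith [hgXX, hpos]
    -- part (b) : comparison with Minkowski time separation
    have hcomp : ∀ p q : M,
        timeSep g T p q ≤
          timeSep (fun (_ : EuclideanSpace ℝ (Fin N)) v w => mink N v w)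
            (fun _ => minkE0 N) (i p) (i q) := by
      intro p q
      unfold timeSep
      refine iSup_le ?_
      rintro ⟨γ, hγ, h0, h1⟩
      have hσsm : ContMDiff 𝓘(ℝ, ℝ) (𝓡 N) 1 (fun t => i (γ t)) :=
        (hiso.contMDiff.of_le (by exact_mod_cast le_top)).comp hγ.contMDiff
      have hσd : ∀ t, curveDeriv (fun t => i (γ t)) t
          = mfderiv (𝓡 n) (𝓡 N) i (γ t) (curveDeriv γ t) :=
        curveDeriv_comp hiso.contMDiff hγ.contMDiff
      have hσseg : IsCausalSeg (fun (_ : EuclideanSpace ℝ (Fin N)) v w => mink N v w)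
          (fun _ => minkE0 N) (fun t => i (γ t)) 0 1 := by
        refine ⟨hσsm, ?_, ?_⟩
        · intro t ht
          constructor
          · rw [hσd t]
            intro h
            refine (hγ.causal t ht).1 (hiso.immersion (γ t) ?_)
            rw [(mfderiv (𝓡 n) (𝓡 N) i (γ t)).map_zero]
            exact h
          · show mink N (curveDeriv (fun t => i (γ t)) t) (curveDeriv (fun t => i (γ t)) t) ≤ 0
            rw [hσd t, hiso.isometric]
            exact (hγ.causal t ht).2
        · intro t ht
          show mink N (curveDeriv (fun t => i (γ t)) t) (minkE0 N) < 0
          rw [hσd t, mink_e0 hN (mfderiv (𝓡 n) (𝓡 N) i (γ t) (curveDeriv γ t))]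
          have := hkey (γ t) _ (hγ.causal t ht) (hγ.future t ht)
          linarith
      have hlen : curveLength (fun (_ : EuclideanSpace ℝ (Fin N)) v w => mink N v w)
          (fun t => i (γ t)) = curveLength g γ := by
        unfold curveLength
        congr 1
        funext t
        simp only [hσd t]
        rw [hiso.isometric]
      calc ENNReal.ofReal (curveLength g γ)
          = ENNReal.ofReal (curveLength
              (fun (_ : EuclideanSpace ℝ (Fin N)) v w => mink N v w) (fun t => i (γ t))) := by
            rw [hlen]
        _ ≤ _ := le_iSup
            (fun (δ : {δ : ℝ → EuclideanSpace ℝ (Fin N) //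
                IsCausalSeg (fun (_ : EuclideanSpace ℝ (Fin N)) v w => mink N v w)
                  (fun _ => minkE0 N) δ 0 1 ∧ δ 0 = i p ∧ δ 1 = i q}) =>
              ENNReal.ofReal (curveLength
                (fun (_ : EuclideanSpace ℝ (Fin N)) v w => mink N v w) δ.1))
            ⟨fun t => i (γ t), hσseg, by simp only [h0], by simp only [h1]⟩
    -- part (b) : finiteness
    have hfin : ∀ p q : M, timeSep g T p q ≠ ⊤ := by
      intro p q
      have hb : timeSep g T p q ≤ ENNReal.ofReal (i q ⟨0, hN⟩ - i p ⟨0, hN⟩) := by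
        unfold timeSep
        refine iSup_le ?_
        rintro ⟨γ, hγ, h0, h1⟩
        have hσsm : ContMDiff 𝓘(ℝ, ℝ) (𝓡 N) 1 (fun t => i (γ t)) :=
          (hiso.contMDiff.of_le (by exact_mod_cast le_top)).comp hγ.contMDiff
        have hσC1 := hσsm.contDiff
        have hσd : ∀ t, curveDeriv (fun t => i (γ t)) t
            = mfderiv (𝓡 n) (𝓡 N) i (γ t) (curveDeriv γ t) :=
          curveDeriv_comp hiso.contMDiff hγ.contMDiff
        have hint : curveLength g γ = ∫ t in (0:ℝ)..1,
            Real.sqrt |mink N (deriv (fun t => i (γ t)) t) (deriv (fun t => i (γ t)) t)| := by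
          unfold curveLength
          congr 1
          funext t
          rw [← curveDeriv_eq_deriv (fun t => i (γ t)) t, hσd t, hiso.isometric]
        have hhC1 := ((hτsm.of_le (by exact_mod_cast le_top)).comp hγ.contMDiff).contDiff
        have hdh : ∀ t, deriv (fun s => i (γ s) (⟨0, hN⟩ : Fin N)) t
            = (deriv (fun t => i (γ t)) t) ⟨0, hN⟩ := by
          intro t
          rw [hderivh hiso.contMDiff γ hγ.contMDiff t, ← hσd t,
            curveDeriv_eq_deriv]
        have hmono_pt : ∀ t ∈ Icc (0:ℝ) 1,
            Real.sqrt |mink N (deriv (fun t => i (γ t)) t) (deriv (fun t => i (γ t)) t)|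
              ≤ deriv (fun s => i (γ s) (⟨0, hN⟩ : Fin N)) t := by
          intro t ht
          rw [hdh t]
          set w := deriv (fun t => i (γ t)) t with hwdef
          have hww : mink N w w ≤ 0 := by
            rw [hwdef, ← curveDeriv_eq_deriv, hσd t, hiso.isometric]
            exact (hγ.causal t ht).2
          have hwz : 0 < w ⟨0, hN⟩ := by
            rw [hwdef, ← curveDeriv_eq_deriv, hσd t]
            exact hkey (γ t) _ (hγ.causal t ht) (hγ.future t ht)
          have habs : |mink N w w| ≤ w ⟨0, hN⟩ ^ 2 := by
            rw [abs_of_nonpos hww, mink_split hN]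
            have hnn : (0:ℝ) ≤ ∑ j ∈ Finset.univ.erase (⟨0, hN⟩ : Fin N), w j * w j :=
              Finset.sum_nonneg fun j _ => mul_self_nonneg (w j)
            nlinarith [hnn]
          calc Real.sqrt |mink N w w| ≤ Real.sqrt (w ⟨0, hN⟩ ^ 2) := Real.sqrt_le_sqrt habs
            _ = w ⟨0, hN⟩ := by rw [Real.sqrt_sq hwz.le]
        have hdc : Continuous (deriv (fun t => i (γ t))) := hσC1.continuous_deriv le_rfl
        have hcont : Continuous fun t =>
            Real.sqrt |mink N (deriv (fun t => i (γ t)) t) (deriv (fun t => i (γ t)) t)| := by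
          have hmc : Continuous fun t =>
              mink N (deriv (fun t => i (γ t)) t) (deriv (fun t => i (γ t)) t) := by
            unfold mink
            apply continuous_finset_sum
            intro j _
            exact (continuous_const.mul
              ((EuclideanSpace.proj j).continuous.comp hdc)).mul
              ((EuclideanSpace.proj j).continuous.comp hdc)
          exact Real.continuous_sqrt.comp hmc.abs
        have hint1 : IntervalIntegrable (fun t =>
            Real.sqrt |mink N (deriv (fun t => i (γ t)) t) (deriv (fun t => i (γ t)) t)|)
            MeasureTheory.volume 0 1 := hcont.intervalIntegrable 0 1
        have hdc2 : Continuous (deriv (fun s => i (γ s) (⟨0, hN⟩ : Fin N))) :=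
          hhC1.continuous_deriv le_rfl
        have hint2 : IntervalIntegrable (deriv (fun s => i (γ s) (⟨0, hN⟩ : Fin N)))
            MeasureTheory.volume 0 1 := hdc2.intervalIntegrable 0 1
        have hle : curveLength g γ ≤ i q ⟨0, hN⟩ - i p ⟨0, hN⟩ := by
          rw [hint]
          calc (∫ t in (0:ℝ)..1, Real.sqrt
                |mink N (deriv (fun t => i (γ t)) t) (deriv (fun t => i (γ t)) t)|)
              ≤ ∫ t in (0:ℝ)..1, deriv (fun s => i (γ s) (⟨0, hN⟩ : Fin N)) t :=
                intervalIntegral.integral_mono_on (by norm_num) hint1 hint2 hmono_pt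
            _ = i (γ 1) ⟨0, hN⟩ - i (γ 0) ⟨0, hN⟩ :=
                intervalIntegral.integral_deriv_eq_sub
                  (fun t _ => (hhC1.differentiable one_ne_zero).differentiableAt) hint2
            _ = i q ⟨0, hN⟩ - i p ⟨0, hN⟩ := by rw [h0, h1]
        exact ENNReal.ofReal_le_ofReal hle
      exact ne_top_of_le_ne_top ENNReal.ofReal_ne_top hb
    refine ⟨⟨X, ⟨hτsm, hX, ?_, ?_⟩, hsteep⟩, hcomp, hfin⟩
    · intro x
      exact lt_of_le_of_lt (hsteep x) (by norm_num)
    · intro x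
      show 0 < g x (X x) (T x)
      rw [hXval x (T x)]
      exact haz x

end
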